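/- Let n be a positive even integer and let S be the linear map on the space of homogeneous degree-n polynomials in variables X, Y over ℚ given by (S·P)(X,Y) = P(Y,-X). Then the dimension of the kernel of S + 1 equals (n + 1 + (-1)^{n/2+1})/2. -/

import Mathlib

open MvPolynomial Finset

namespace DKAux

lemma deg2 (f : Fin 2 →₀ ℕ) : f.degree = f 0 + f 1 := by
  rw [Finsupp.degree_apply, Finset.sum_subset (Finset.subset_univ _), Fin.sum_univ_two]
  intro x _ h; simpa using h

noncomputable def dd (n k : ℕ) : Fin 2 →₀ ℕ :=
  Finsupp.single 0 (n - k) + Finsupp.single 1 k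

lemma dd_zero (n k : ℕ) : dd n k 0 = n - k := by simp [dd, Finsupp.single_apply]

lemma dd_one (n k : ℕ) : dd n k 1 = k := by simp [dd, Finsupp.single_apply]

lemma dd_inj {n j k : ℕ} (h : dd n j = dd n k) : j = k := by
  have := congrArg (fun f => f 1) h
  simpa [dd_one] using this

lemma dd_degree {n k : ℕ} (hk : k ≤ n) : (dd n k).degree = n := by
  rw [deg2, dd_zero, dd_one]; omega

lemma mono_eq (a b : ℕ) (c : ℚ) :
    (monomial (Finsupp.single 0 a + Finsupp.single 1 b) c : MvPolynomial (Fin 2) ℚ)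
      = C c * (X 0 ^ a * X 1 ^ b) := by
  rw [X_pow_eq_monomial, X_pow_eq_monomial, monomial_mul, one_mul, C_mul_monomial, mul_one]

lemma dd_sub {n k : ℕ} (hk : k ≤ n) :
    dd n (n - k) = Finsupp.single 0 k + Finsupp.single 1 (n - k) := by
  rw [dd, Nat.sub_sub_self hk]

lemma S_mono {n k : ℕ} (hk : k ≤ n) (c : ℚ) :
    aeval ![X 1, -X 0] (monomial (dd n k) c : MvPolynomial (Fin 2) ℚ)
      = C ((-1)^k) * monomial (dd n (n - k)) c := by
  have h1 : (monomial (dd n k) c : MvPolynomial (Fin 2) ℚ)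
      = C c * (X 0 ^ (n-k) * X 1 ^ k) := mono_eq _ _ _
  rw [h1, map_mul, map_mul, map_pow, map_pow, aeval_C, aeval_X, aeval_X]
  have h2 : (![X 1, -X 0] : Fin 2 → MvPolynomial (Fin 2) ℚ) 0 = X 1 := rfl
  have h3 : (![X 1, -X 0] : Fin 2 → MvPolynomial (Fin 2) ℚ) 1 = - X 0 := rfl
  rw [h2, h3, dd_sub hk, mono_eq]
  have h4 : (C ((-1:ℚ)^k) : MvPolynomial (Fin 2) ℚ) = (-1)^k := by
    rw [map_pow]; simp
  have h5 : (algebraMap ℚ (MvPolynomial (Fin 2) ℚ)) c = C c := rfl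
  rw [h4, h5, neg_pow]
  ring

lemma decomp {n : ℕ} {P : MvPolynomial (Fin 2) ℚ} (hP : P.IsHomogeneous n) :
    P = ∑ k ∈ Finset.range (n+1), monomial (dd n k) (coeff (dd n k) P) := by
  apply MvPolynomial.ext
  intro d
  rw [MvPolynomial.coeff_sum]
  simp only [coeff_monomial]
  by_cases hd : coeff d P = 0
  · rw [hd, Finset.sum_eq_zero]
    intro k _
    split_ifs with h
    · rw [h, hd]
    · rfl
  · have hdeg : d.degree = n := by
      by_contra h; exact hd (hP.coeff_eq_zero h)
    rw [deg2] at hdeg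
    have hd1 : d 1 ≤ n := by omega
    have hdd : dd n (d 1) = d := by
      ext i
      fin_cases i <;> simp only [Fin.zero_eta, Fin.mk_one, Fin.isValue]
      · show dd n (d 1) 0 = d 0; rw [dd_zero]; omega
      · show dd n (d 1) 1 = d 1; rw [dd_one]
    have : ∀ k ∈ Finset.range (n+1),
        (if dd n k = d then coeff (dd n k) P else 0)
          = if k = d 1 then coeff d P else 0 := by
      intro k hk
      by_cases h : dd n k = d
      · have : k = d 1 := by
          have := congrArg (fun f => f 1) h
          simpa [dd_one] using this
        rw [if_pos h, if_pos this, h]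
      · have : ¬ k = d 1 := by
          intro hkd; exact h (hkd ▸ hdd)
        rw [if_neg h, if_neg this]
    rw [Finset.sum_congr rfl this, Finset.sum_ite_eq' (Finset.range (n+1)) (d 1)]
    rw [if_pos (Finset.mem_range.mpr (by omega))]

/-- the eigenvector family -/
noncomputable def q (n k : ℕ) : MvPolynomial (Fin 2) ℚ :=
  monomial (dd n k) 1 - monomial (dd n (n - k)) ((-1)^k)

lemma neg_one_pow_sub {R : Type*} [Ring R] {n k : ℕ} (he : Even n) (hk : k ≤ n) :
    ((-1 : R)) ^ (n - k) = (-1) ^ k := by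
  have h1 : ((-1 : R)) ^ (n - k) * (-1) ^ k = 1 := by
    rw [← pow_add, Nat.sub_add_cancel hk, he.neg_one_pow]
  have h2 : ((-1 : R)) ^ k * (-1) ^ k = 1 := by
    rw [← pow_add, Even.neg_one_pow ⟨k, rfl⟩]
  calc ((-1:R))^(n-k) = ((-1)^(n-k) * (-1)^k) * (-1)^k := by rw [mul_assoc, h2, mul_one]
  _ = (-1)^k := by rw [h1, one_mul]

lemma q_homog {n k : ℕ} (hk : k ≤ n) : (q n k).IsHomogeneous n := by
  apply MvPolynomial.IsHomogeneous.sub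
  · exact isHomogeneous_monomial _ (dd_degree hk)
  · exact isHomogeneous_monomial _ (dd_degree (Nat.sub_le n k))

lemma q_ker {n k : ℕ} (hk : k ≤ n) (he : Even n) :
    aeval ![X 1, -X 0] (q n k) + q n k = 0 := by
  rw [q, map_sub, S_mono hk, S_mono (Nat.sub_le n k), Nat.sub_sub_self hk]
  have h4 : ∀ j : ℕ, (C ((-1:ℚ)^j) : MvPolynomial (Fin 2) ℚ) = (-1)^j := by
    intro j; rw [map_pow]; simp
  have hm : ∀ (d : Fin 2 →₀ ℕ), (monomial d ((-1:ℚ)^k) : MvPolynomial (Fin 2) ℚ)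
      = (-1)^k * monomial d 1 := by
    intro d; rw [← h4, C_mul_monomial, mul_one]
  rw [h4, h4, hm, hm, neg_one_pow_sub he hk]
  have h2 : ((-1 : MvPolynomial (Fin 2) ℚ)) ^ k * (-1) ^ k = 1 := by
    rw [← pow_add, Even.neg_one_pow ⟨k, rfl⟩]
  ring_nf
  have h5 : ((-1 : MvPolynomial (Fin 2) ℚ))^(k*2) = 1 := Even.neg_one_pow ⟨k, by ring⟩
  rw [h5, mul_one, sub_self]

lemma coeff_relation {n : ℕ} (he : Even n) {P : MvPolynomial (Fin 2) ℚ}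
    (hP : P.IsHomogeneous n)
    (hker : aeval ![X 1, -X 0] P + P = 0) {j : ℕ} (hj : j ≤ n) :
    (-1)^j * coeff (dd n (n - j)) P + coeff (dd n j) P = 0 := by
  have hPd := decomp hP
  have hS : aeval ![X 1, -X 0] P
      = ∑ k ∈ Finset.range (n+1), monomial (dd n (n-k)) ((-1)^k * coeff (dd n k) P) := by
    conv_lhs => rw [hPd]
    rw [map_sum]
    apply Finset.sum_congr rfl
    intro k hk
    rw [Finset.mem_range] at hk
    rw [S_mono (by omega : k ≤ n), C_mul_monomial]
  have h0 := congrArg (coeff (dd n j)) hker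
  rw [coeff_add, hS, MvPolynomial.coeff_sum] at h0
  simp only [coeff_monomial] at h0
  have hcond : ∀ k ∈ Finset.range (n+1),
      (if dd n (n-k) = dd n j then ((-1):ℚ)^k * coeff (dd n k) P else 0)
        = if k = n - j then (-1)^k * coeff (dd n k) P else 0 := by
    intro k hk
    rw [Finset.mem_range] at hk
    by_cases h : dd n (n-k) = dd n j
    · have := dd_inj h
      have hk2 : k = n - j := by omega
      rw [if_pos h, if_pos hk2]
    · have hne : ¬ k = n - j := by
        intro hkd
        apply h
        subst hkd
        congr 1
        omega
      rw [if_neg h, if_neg hne]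
  rw [Finset.sum_congr rfl hcond,
    Finset.sum_ite_eq' (Finset.range (n+1)) (n-j),
    if_pos (Finset.mem_range.mpr (by omega)),
    neg_one_pow_sub he hj] at h0
  simpa using h0

lemma sum_q {n : ℕ} (he : Even n) {P : MvPolynomial (Fin 2) ℚ}
    (hP : P.IsHomogeneous n) (hker : aeval ![X 1, -X 0] P + P = 0) :
    ∑ k ∈ Finset.range (n+1), coeff (dd n k) P • q n k = (2:ℚ) • P := by
  have h1 : ∀ k, coeff (dd n k) P • q n k
      = monomial (dd n k) (coeff (dd n k) P)
        - monomial (dd n (n-k)) ((-1)^k * coeff (dd n k) P) := by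
    intro k
    rw [q, smul_sub, smul_monomial, smul_monomial, smul_eq_mul, mul_one, smul_eq_mul,
      mul_comm]
  simp only [h1]
  rw [Finset.sum_sub_distrib]
  have h2 : ∑ k ∈ Finset.range (n+1), monomial (dd n (n-k)) ((-1)^k * coeff (dd n k) P)
      = -P := by
    rw [← Finset.sum_range_reflect]
    have h3 : ∀ k ∈ Finset.range (n+1),
        (monomial (dd n (n - (n + 1 - 1 - k)))) ((-1)^(n+1-1-k) * coeff (dd n (n+1-1-k)) P)
          = monomial (dd n k) (- coeff (dd n k) P) := by
      intro k hk
      rw [Finset.mem_range] at hk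
      have e1 : n + 1 - 1 - k = n - k := by omega
      have e2 : n - (n - k) = k := by omega
      rw [e1, e2, neg_one_pow_sub he (by omega : k ≤ n)]
      congr 1
      have := coeff_relation he hP hker (by omega : k ≤ n)
      linarith
    rw [Finset.sum_congr rfl h3]
    have h4 : ∀ k ∈ Finset.range (n+1),
        (monomial (dd n k)) (- coeff (dd n k) P) = - monomial (dd n k) (coeff (dd n k) P) := by
      intro k _
      exact map_neg _ _
    rw [Finset.sum_congr rfl h4, Finset.sum_neg_distrib, ← decomp hP]
  rw [h2, ← decomp hP, sub_neg_eq_add, two_smul]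

lemma mem_M_iff {n : ℕ} (P : MvPolynomial (Fin 2) ℚ) :
    P ∈ (homogeneousSubmodule (Fin 2) ℚ n ⊓
          LinearMap.ker
            ((aeval ![X 1, -X 0] :
              MvPolynomial (Fin 2) ℚ →ₐ[ℚ] MvPolynomial (Fin 2) ℚ).toLinearMap
              + LinearMap.id))
      ↔ P.IsHomogeneous n ∧ aeval ![X 1, -X 0] P + P = 0 := by
  rw [Submodule.mem_inf, mem_homogeneousSubmodule, LinearMap.mem_ker, LinearMap.add_apply,
    LinearMap.id_apply, AlgHom.toLinearMap_apply]

lemma span_eq {n m r : ℕ} (hm : n = m + m) (hpos : 0 < m) (hr : r ≤ m + 1)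
    (hgen : ∀ j, j ≤ n → q n j ∈ Submodule.span ℚ (Set.range (fun i : Fin r => q n i.val))) :
    (homogeneousSubmodule (Fin 2) ℚ n ⊓
          LinearMap.ker
            ((aeval ![X 1, -X 0] :
              MvPolynomial (Fin 2) ℚ →ₐ[ℚ] MvPolynomial (Fin 2) ℚ).toLinearMap
              + LinearMap.id))
      = Submodule.span ℚ (Set.range (fun i : Fin r => q n i.val)) := by
  have he : Even n := ⟨m, hm⟩
  apply le_antisymm
  · intro P hP
    rw [mem_M_iff] at hP
    obtain ⟨h1, h2⟩ := hP
    have hPq : P = (2⁻¹ : ℚ) • ∑ k ∈ Finset.range (n+1), coeff (dd n k) P • q n k := by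
      rw [sum_q he h1 h2, smul_smul]
      norm_num
    rw [hPq]
    apply Submodule.smul_mem
    apply Submodule.sum_mem
    intro k hk
    rw [Finset.mem_range] at hk
    exact Submodule.smul_mem _ _ (hgen k (by omega))
  · rw [Submodule.span_le]
    rintro _ ⟨i, rfl⟩
    rw [SetLike.mem_coe, mem_M_iff]
    have hi : (i : ℕ) ≤ n := by have := i.isLt; omega
    exact ⟨q_homog hi, q_ker hi he⟩

lemma indep {n m r : ℕ} (hm : n = m + m) (hr : r ≤ m + 1) (hodd : m < r → Odd m) :
    LinearIndependent ℚ (fun i : Fin r => q n (i : ℕ)) := by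
  rw [Fintype.linearIndependent_iff]
  intro g hg i
  have h0 := congrArg (coeff (dd n (i : ℕ))) hg
  rw [MvPolynomial.coeff_sum] at h0
  simp only [MvPolynomial.coeff_smul, q, coeff_sub, coeff_monomial, smul_eq_mul] at h0
  have hi : (i : ℕ) ≤ m := by have := i.isLt; omega
  have hterm : ∀ k ∈ Finset.univ (α := Fin r),
      g k * ((if dd n (k : ℕ) = dd n (i : ℕ) then (1:ℚ) else 0)
        - (if dd n (n - (k : ℕ)) = dd n (i : ℕ) then ((-1):ℚ)^(k : ℕ) else 0))
      = if k = i then g k * (1 - (if (i : ℕ) = m then ((-1):ℚ)^m else 0)) else 0 := by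
    intro k _
    have hk : (k : ℕ) ≤ m := by have := k.isLt; omega
    by_cases hki : k = i
    · subst hki
      rw [if_pos rfl, if_pos rfl]
      congr 2
      by_cases him : (k : ℕ) = m
      · rw [if_pos (by congr 1; omega), if_pos him, him]
      · rw [if_neg, if_neg him]
        intro h
        have := dd_inj h
        omega
    · have h1 : ¬ dd n (k : ℕ) = dd n (i : ℕ) := by
        intro h
        exact hki (Fin.ext (dd_inj h))
      have h2 : ¬ dd n (n - (k : ℕ)) = dd n (i : ℕ) := by
        intro h
        have := dd_inj h
        apply hki
        apply Fin.ext
        omega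
      rw [if_neg h1, if_neg h2, if_neg hki]
      ring
  rw [Finset.sum_congr rfl hterm, Finset.sum_ite_eq' Finset.univ i,
    if_pos (Finset.mem_univ i)] at h0
  have hcz : coeff (dd n (i:ℕ)) (0 : MvPolynomial (Fin 2) ℚ) = 0 := coeff_zero _
  rw [hcz] at h0
  by_cases him : (i : ℕ) = m
  · rw [if_pos him] at h0
    have hmo : Odd m := hodd (by omega)
    rw [hmo.neg_one_pow] at h0
    have : g i * 2 = 0 := by linarith
    linarith
  · rw [if_neg him] at h0
    linarith

lemma q_reflect {n k : ℕ} (he : Even n) (hk : k ≤ n) :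
    q n (n - k) = (-(-1:ℚ)^k) • q n k := by
  rw [q, q, Nat.sub_sub_self hk, neg_one_pow_sub he hk, smul_sub, smul_monomial, smul_monomial,
    smul_eq_mul, smul_eq_mul, mul_one]
  have h1 : (-(-1:ℚ)^k) * ((-1)^k) = -1 := by
    rw [neg_mul, ← pow_add]
    simp [Even.neg_one_pow (⟨k, rfl⟩ : Even (k + k))]
  rw [h1, map_neg, map_neg, ← map_neg (monomial (dd n k)) ((-1:ℚ)^k)]
  abel_nf
  simp only [neg_one_zsmul, map_neg]

lemma q_mid {n m : ℕ} (hm : n = m + m) (hme : Even m) : q n m = 0 := by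
  have h1 : n - m = m := by omega
  rw [q, h1, hme.neg_one_pow, sub_self]

end DKAux

open DKAux

theorem dim_ker_S_add_one (n : ℕ) (hn : 0 < n) (he : Even n) :
    (2 * Module.finrank ℚ
        ↥(homogeneousSubmodule (Fin 2) ℚ n ⊓
          LinearMap.ker
            ((aeval ![X 1, -X 0] :
              MvPolynomial (Fin 2) ℚ →ₐ[ℚ] MvPolynomial (Fin 2) ℚ).toLinearMap
              + LinearMap.id)) : ℤ)
      = n + 1 + (-1) ^ (n / 2 + 1) := by
  obtain ⟨m, hm⟩ := he
  have he' : Even n := ⟨m, hm⟩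
  have hpos : 0 < m := by omega
  have hn2 : n / 2 = m := by omega
  rcases Nat.even_or_odd m with hme | hmo
  · -- m even : dimension is m
    have hgen : ∀ j, j ≤ n →
        q n j ∈ Submodule.span ℚ (Set.range (fun i : Fin m => q n i.val)) := by
      intro j hj
      rcases lt_trichotomy j m with h | h | h
      · exact Submodule.subset_span ⟨⟨j, h⟩, rfl⟩
      · rw [h, q_mid hm hme]
        exact Submodule.zero_mem _
      · have hk : n - j < m := by omega
        have hjk : j = n - (n - j) := by omega
        rw [hjk, q_reflect he' (by omega : n - j ≤ n)]
        exact Submodule.smul_mem _ _ (Submodule.subset_span ⟨⟨n - j, hk⟩, rfl⟩)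
    rw [span_eq hm hpos (by omega) hgen,
      finrank_span_eq_card (indep hm (by omega) (fun h => absurd h (lt_irrefl m))),
      Fintype.card_fin]
    have hpow : ((-1:ℤ))^(n/2+1) = -1 := by
      rw [hn2]
      exact (Even.add_one hme).neg_one_pow
    rw [hpow]
    push_cast
    omega
  · -- m odd : dimension is m + 1
    have hgen : ∀ j, j ≤ n →
        q n j ∈ Submodule.span ℚ (Set.range (fun i : Fin (m+1) => q n i.val)) := by
      intro j hj
      rcases le_or_gt j m with h | h
      · exact Submodule.subset_span ⟨⟨j, by omega⟩, rfl⟩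
      · have hk : n - j < m + 1 := by omega
        have hjk : j = n - (n - j) := by omega
        rw [hjk, q_reflect he' (by omega : n - j ≤ n)]
        exact Submodule.smul_mem _ _ (Submodule.subset_span ⟨⟨n - j, hk⟩, rfl⟩)
    rw [span_eq hm hpos (by omega) hgen,
      finrank_span_eq_card (indep hm (by omega) (fun _ => hmo)),
      Fintype.card_fin]
    have hpow : ((-1:ℤ))^(n/2+1) = 1 := by
      rw [hn2]
      exact (Odd.add_one hmo).neg_one_pow
    rw [hpow]
    push_cast
    omega
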